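/- Let G be a nonbipartite matching covered graph with a Hamiltonian cycle C (necessarily of even length, since G is matchable). Then, with respect to the proper 2-coloring of V(C), G has at least one black monochromatic chord of C and at least one white monochromatic chord of C. -/

import Mathlib

/-- `M` is a perfect matching of `G`, regarded as a set of edges: every edge of `M` is an
edge of `G` and every vertex lies in exactly one edge of `M`. -/
def IsPM {V : Type*} (G : SimpleGraph V) (M : Set (Sym2 V)) : Prop :=
  M ⊆ G.edgeSet ∧ ∀ w : V, ∃! e, e ∈ M ∧ w ∈ e

/-- A graph is matchable if it has a perfect matching. -/
def Matchable {V : Type*} (G : SimpleGraph V) : Prop :=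
  ∃ M, IsPM G M

/-- A global forcing set of `G`: a set `S` of edges of `G` distinguishing all
perfect matchings of `G`. -/
def IsGlobalForcingSet {V : Type*} (G : SimpleGraph V) (S : Set (Sym2 V)) : Prop :=
  S ⊆ G.edgeSet ∧
    ∀ M₁ M₂, IsPM G M₁ → IsPM G M₂ → M₁ ≠ M₂ → S ∩ M₁ ≠ S ∩ M₂

/-- The global forcing number: the minimum cardinality of a global forcing set. -/
noncomputable def gf {V : Type*} (G : SimpleGraph V) : ℕ :=
  sInf {n | ∃ S, IsGlobalForcingSet G S ∧ S.ncard = n}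

/-- An anti-forcing set of a perfect matching `M` of `G`: a set `S` of edges of `G`
disjoint from `M` such that `M` is the unique perfect matching of `G - S`. -/
def IsAntiForcingSet {V : Type*} (G : SimpleGraph V) (M S : Set (Sym2 V)) : Prop :=
  S ⊆ G.edgeSet ∧ S ∩ M = ∅ ∧ IsPM (G.deleteEdges S) M ∧
    ∀ M', IsPM (G.deleteEdges S) M' → M' = M

/-- The anti-forcing number of a perfect matching `M` of `G`. -/
noncomputable def af {V : Type*} (G : SimpleGraph V) (M : Set (Sym2 V)) : ℕ :=
  sInf {n | ∃ S, IsAntiForcingSet G M S ∧ S.ncard = n}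

/-- The maximum anti-forcing number of `G`. -/
noncomputable def Af {V : Type*} (G : SimpleGraph V) : ℕ :=
  sSup {n | ∃ M, IsPM G M ∧ af G M = n}

/-- A connected graph with at least one edge is matching covered if every edge lies
in some perfect matching. -/
def MatchingCovered {V : Type*} (G : SimpleGraph V) : Prop :=
  G.Connected ∧ G.edgeSet.Nonempty ∧ ∀ e ∈ G.edgeSet, ∃ M, IsPM G M ∧ e ∈ M

/-- `v` is black in the proper 2-coloring of the (even) cycle `C`. -/
def blackOn {V : Type*} [DecidableEq V] {G : SimpleGraph V} {a : V}
    (C : G.Walk a a) (v : V) : Prop :=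
  C.support.idxOf v % 2 = 0

/-- `e` is a black chord of `C`: both ends of `e` are black. -/
def BlackChordOn {V : Type*} [DecidableEq V] {G : SimpleGraph V} {a : V}
    (C : G.Walk a a) (e : Sym2 V) : Prop :=
  ∃ x y : V, e = s(x, y) ∧ blackOn C x ∧ blackOn C y

/-- `e` is a white chord of `C`: both ends of `e` are white. -/
def WhiteChordOn {V : Type*} [DecidableEq V] {G : SimpleGraph V} {a : V}
    (C : G.Walk a a) (e : Sym2 V) : Prop :=
  ∃ x y : V, e = s(x, y) ∧ ¬ blackOn C x ∧ ¬ blackOn C y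

/-- `e` is a monochromatic chord of `C`: both ends have the same color. -/
def MonochromaticOn {V : Type*} [DecidableEq V] {G : SimpleGraph V} {a : V}
    (C : G.Walk a a) (e : Sym2 V) : Prop :=
  BlackChordOn C e ∨ WhiteChordOn C e

lemma pm_unique {V : Type*} {G : SimpleGraph V} {M : Set (Sym2 V)} (hM : IsPM G M)
    {v : V} {e f : Sym2 V} (he : e ∈ M) (hf : f ∈ M) (hve : v ∈ e) (hvf : v ∈ f) :
    e = f := by
  obtain ⟨g, -, hu⟩ := hM.2 v
  rw [hu e ⟨he, hve⟩, hu f ⟨hf, hvf⟩]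

lemma pm_partner {V : Type*} {G : SimpleGraph V} {M : Set (Sym2 V)} (hM : IsPM G M)
    (v : V) : ∃ w, s(v, w) ∈ M ∧ v ≠ w := by
  obtain ⟨e, ⟨heM, hve⟩, -⟩ := hM.2 v
  refine ⟨Sym2.Mem.other hve, ?_, ?_⟩
  · rw [Sym2.other_spec hve]; exact heM
  · have : s(v, Sym2.Mem.other hve) ∈ G.edgeSet := by
      rw [Sym2.other_spec hve]; exact hM.1 heM
    exact (G.mem_edgeSet.mp this).ne

lemma even_card_invol {α : Type*} [DecidableEq α] (p : α → α) (hp : ∀ a, p (p a) = a)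
    (hne : ∀ a, p a ≠ a) (s : Finset α) (hcl : ∀ a ∈ s, p a ∈ s) : Even s.card := by
  induction s using Finset.strongInduction with
  | _ s ih =>
    rcases s.eq_empty_or_nonempty with rfl | ⟨x, hx⟩
    · simp
    · have hpx : p x ∈ s := hcl x hx
      have h1 : p x ≠ x := hne x
      have h2 : p x ∈ s.erase x := Finset.mem_erase.mpr ⟨h1, hpx⟩
      have hcl' : ∀ b ∈ (s.erase x).erase (p x), p b ∈ (s.erase x).erase (p x) := by
        intro b hb
        simp only [Finset.mem_erase] at hb ⊢
        obtain ⟨hbpx, hbx, hbs⟩ := hb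
        refine ⟨?_, ?_, hcl b hbs⟩
        · intro h; exact hbx (by rw [← hp b, h, hp])
        · intro h; exact hbpx (by rw [← hp b, h])
      have hss : (s.erase x).erase (p x) ⊂ s :=
        lt_of_le_of_lt (Finset.erase_subset _ _) (Finset.erase_ssubset hx)
      have hev := ih _ hss hcl'
      have c1 := Finset.card_erase_of_mem h2
      have c2 := Finset.card_erase_of_mem hx
      have h3 : 0 < (s.erase x).card := Finset.card_pos.mpr ⟨_, h2⟩
      obtain ⟨k, hk⟩ := hev
      exact ⟨k + 1, by omega⟩

lemma even_card_of_pm {V : Type*} [Fintype V] [DecidableEq V] {G : SimpleGraph V}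
    {M : Set (Sym2 V)} (hM : IsPM G M) : Even (Fintype.card V) := by
  choose p hp hne using pm_partner hM
  have hinv : ∀ v, p (p v) = v := by
    intro v
    have h := pm_unique hM (hp (p v)) (hp v) (Sym2.mem_mk_left _ _) (Sym2.mem_mk_right _ _)
    rw [Sym2.eq_iff] at h
    rcases h with ⟨h1, h2⟩ | ⟨h1, h2⟩
    · exact absurd h1.symm (hne v)
    · exact h2
  rw [← Finset.card_univ]
  exact even_card_invol p hinv (fun v => (hne v).symm) _ (by simp)

lemma key {V : Type*} [Fintype V] [DecidableEq V] {G : SimpleGraph V} {M : Set (Sym2 V)}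
    (hM : IsPM G M) (c : V → Prop) [DecidablePred c] {x y : V} (hxy : s(x, y) ∈ M)
    (hx : c x) (hy : c y) (hno : ∀ u v : V, s(u, v) ∈ M → c u ∨ c v) :
    (Finset.univ.filter fun v => ¬ c v).card + 2 ≤ (Finset.univ.filter c).card := by
  classical
  choose p hp hne using pm_partner hM
  have hxney : x ≠ y := (G.mem_edgeSet.mp (hM.1 hxy)).ne
  set B := Finset.univ.filter c with hB
  have hxB : x ∈ B := by simp [hB, hx]
  have hyB : y ∈ B := by simp [hB, hy]
  set B' := (B.erase x).erase y with hB'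
  have hmaps : ∀ w ∈ (Finset.univ.filter fun v => ¬ c v), p w ∈ B' := by
    intro w hw
    simp only [Finset.mem_filter, Finset.mem_univ, true_and] at hw
    have hcw : c (p w) := by
      rcases hno w (p w) (hp w) with h | h
      · exact absurd h hw
      · exact h
    have hwx : w ≠ x := fun h => hw (h ▸ hx)
    have hwy : w ≠ y := fun h => hw (h ▸ hy)
    have hpwx : p w ≠ x := by
      intro h
      have := pm_unique hM (hp w) hxy (h ▸ Sym2.mem_mk_right _ _) (Sym2.mem_mk_left _ _)
      rw [Sym2.eq_iff] at this
      rcases this with ⟨h1, h2⟩ | ⟨h1, h2⟩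
      · exact hwx h1
      · exact hwy h1
    have hpwy : p w ≠ y := by
      intro h
      have := pm_unique hM (hp w) hxy (h ▸ Sym2.mem_mk_right _ _) (Sym2.mem_mk_right _ _)
      rw [Sym2.eq_iff] at this
      rcases this with ⟨h1, h2⟩ | ⟨h1, h2⟩
      · exact hwx h1
      · exact hwy h1
    simp only [hB', Finset.mem_erase]
    exact ⟨hpwy, hpwx, by simp [hB, hcw]⟩
  have hinj : ∀ w₁ ∈ (Finset.univ.filter fun v => ¬ c v),
      ∀ w₂ ∈ (Finset.univ.filter fun v => ¬ c v), p w₁ = p w₂ → w₁ = w₂ := by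
    intro w₁ _ w₂ _ h
    have := pm_unique hM (hp w₁) (hp w₂) (Sym2.mem_mk_right _ _)
      (h ▸ Sym2.mem_mk_right _ _)
    rw [Sym2.eq_iff] at this
    rcases this with ⟨h1, h2⟩ | ⟨h1, h2⟩
    · exact h1
    · rw [h1, ← h, h2]
  have hle : (Finset.univ.filter fun v => ¬ c v).card ≤ B'.card :=
    Finset.card_le_card_of_injOn p hmaps hinj
  have hyB2 : y ∈ B.erase x := Finset.mem_erase.mpr ⟨hxney.symm, hyB⟩
  have c1 : B'.card = (B.erase x).card - 1 := Finset.card_erase_of_mem hyB2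
  have c2 := Finset.card_erase_of_mem hxB
  have h3 : 0 < (B.erase x).card := Finset.card_pos.mpr ⟨_, hyB2⟩
  omega

lemma count_range_even (n : ℕ) :
    ((Finset.range n).filter fun k => k % 2 = 0).card = (n + 1) / 2 := by
  induction n with
  | zero => simp
  | succ n ih =>
    rw [Finset.range_add_one, Finset.filter_insert]
    by_cases h : n % 2 = 0
    · rw [if_pos h, Finset.card_insert_of_notMem (by simp), ih]; omega
    · rw [if_neg h, ih]; omega

lemma walk_edges_index {V : Type*} {G : SimpleGraph V} {a b : V} (p : G.Walk a b) :
    ∀ e ∈ p.edges, ∃ i, ∃ h : i + 1 < p.support.length,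
      e = s(p.support[i], p.support[i + 1]) := by
  induction p with
  | nil => simp
  | @cons u v w h q ih =>
    intro e he
    rw [SimpleGraph.Walk.edges_cons, List.mem_cons] at he
    rcases he with rfl | he
    · have h0 : q.support[0]'(by simp [SimpleGraph.Walk.length_support]) = v := by
        rw [List.getElem_zero]; exact q.head_support
      refine ⟨0, by simp [SimpleGraph.Walk.support_cons, List.length_pos_iff], ?_⟩
      simp only [SimpleGraph.Walk.support_cons, List.getElem_cons_zero,
        List.getElem_cons_succ, h0]
    · obtain ⟨i, hi, rfl⟩ := ih e he
      refine ⟨i + 1, by simp only [SimpleGraph.Walk.support_cons, List.length_cons]; omega, ?_⟩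
      simp only [SimpleGraph.Walk.support_cons, List.getElem_cons_succ]

theorem getElem_idx_congr {α : Type*} {l : List α} {i j : ℕ} (h : i = j)
    (hi : i < l.length) : l[i] = l[j]'(h ▸ hi) := by subst h; rfl

lemma indexOf_getElem_le {α : Type*} [DecidableEq α] :
    ∀ (l : List α) (i : ℕ) (h : i < l.length), l.idxOf l[i] ≤ i := by
  intro l
  induction l with
  | nil => intro i h; simp at h
  | cons a l ih =>
    intro i h
    cases i with
    | zero => simp
    | succ i =>
      simp only [List.getElem_cons_succ]
      by_cases hab : a = l[i]'(by simpa using h)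
      · rw [← hab, List.idxOf_cons_self]; omega
      · rw [List.idxOf_cons_ne _ hab]
        exact Nat.succ_le_succ (ih i _)

lemma edge_bicolor {V : Type*} [DecidableEq V] {G : SimpleGraph V} {a : V}
    (C : G.Walk a a) (n : ℕ) (hLlen : C.support.length = n + 1) (h3 : 3 ≤ n)
    (hnpar : n % 2 = 0)
    (hfa : C.support.idxOf a = 0)
    (hLn : ∀ (h : n < C.support.length), C.support[n] = a)
    (hidx : ∀ i (hi : i < n), C.support.idxOf (C.support[i]'(by omega)) = i) :
    ∀ e ∈ C.edges, ∃ u v, e = s(u, v) ∧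
      C.support.idxOf u % 2 = 0 ∧ ¬ C.support.idxOf v % 2 = 0 := by
  intro e he
  obtain ⟨i, hilt, rfl⟩ := walk_edges_index C e he
  have hilt' : i + 1 < n + 1 := by rw [← hLlen]; exact hilt
  by_cases hc : i + 1 < n
  · have hu := hidx i (by omega)
    have hv := hidx (i + 1) hc
    rcases Nat.even_or_odd i with hpar | hpar
    · obtain ⟨l, hl⟩ := hpar
      exact ⟨_, _, rfl, by rw [hu]; omega, by rw [hv]; omega⟩
    · obtain ⟨l, hl⟩ := hpar
      refine ⟨_, _, Sym2.eq_swap, by rw [hv]; omega, by rw [hu]; omega⟩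
  · have hieq : i + 1 = n := by omega
    have hvn : C.support[i + 1]'(by omega) = a := by
      rw [getElem_idx_congr hieq (by omega)]
      exact hLn (by omega)
    have hu := hidx i (by omega)
    refine ⟨a, C.support[i]'(by omega), ?_, by rw [hfa], by rw [hu]; omega⟩
    rw [hvn]
    exact Sym2.eq_swap

set_option maxHeartbeats 1000000 in
/-- Let `G` be a nonbipartite matching covered graph with a Hamiltonian cycle `C`. Then
`G` has at least one black monochromatic chord of `C` and at least one white
monochromatic chord of `C`. -/
theorem statement_19 {V : Type*} [Fintype V] [DecidableEq V] (G : SimpleGraph V)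
    (hmc : MatchingCovered G) (hnb : ¬ G.Colorable 2)
    (a : V) (C : G.Walk a a) (hC : C.IsCycle) (hham : ∀ v : V, v ∈ C.support) :
    (∃ e : Sym2 V, e ∈ G.edgeSet ∧ e ∉ C.edges ∧ BlackChordOn C e) ∧
    (∃ e : Sym2 V, e ∈ G.edgeSet ∧ e ∉ C.edges ∧ WhiteChordOn C e) := by
  classical
  obtain ⟨hconn, ⟨e₀, he₀⟩, hcov⟩ := hmc
  obtain ⟨n, hLlen⟩ : ∃ n, C.support.length = n + 1 := ⟨C.length, C.length_support⟩
  have htail : C.support.tail.Nodup := hC.support_nodup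
  have h3 : 3 ≤ n := by
    have h := hC.three_le_length
    have h2 := C.length_support
    omega
  have hcons : C.support = a :: C.support.tail := C.support_eq_cons
  have htlen : C.support.tail.length = n := by
    have h := hLlen
    rw [hcons, List.length_cons] at h
    omega
  have htne : C.support.tail ≠ [] := by
    intro h; rw [h] at htlen; simp at htlen; omega
  have hlast : C.support.tail.getLast htne = a := by
    rw [List.getLast_tail]
    exact C.getLast_support
  have hL0 : ∀ (h : 0 < C.support.length), C.support[0] = a := by
    intro h; rw [List.getElem_zero]; exact C.head_support
  have htlast : ∀ (h : n - 1 < C.support.tail.length), C.support.tail[n-1] = a := by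
    intro h
    have h1 := List.getLast_eq_getElem (l := C.support.tail) htne
    rw [hlast] at h1
    rw [getElem_idx_congr (show n - 1 = C.support.tail.length - 1 by omega) h, ← h1]
  -- uniqueness of positions
  have huniq : ∀ i j (hi : i < C.support.length) (hj : j < C.support.length),
      i < j → C.support[i] = C.support[j] → i = 0 ∧ j = n := by
    intro i j hi hj hij heq
    have hjt : C.support[j] = C.support.tail[j-1]'(by omega) := by
      rw [List.getElem_tail]
      congr 1
      omega
    rcases Nat.eq_zero_or_pos i with rfl | hipos
    · refine ⟨rfl, ?_⟩
      rw [hL0 hi] at heq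
      have h2 : C.support.tail[j-1]'(by omega) = C.support.tail[n-1]'(by omega) := by
        rw [← hjt, ← heq, htlast]
      have := (htail.getElem_inj_iff).mp h2
      omega
    · have hit : C.support[i] = C.support.tail[i-1]'(by omega) := by
        rw [List.getElem_tail]
        congr 1
        omega
      rw [hit, hjt] at heq
      have := (htail.getElem_inj_iff).mp heq
      omega
  have hidx : ∀ i (hi : i < n), C.support.idxOf (C.support[i]'(by omega)) = i := by
    intro i hi
    have hi' : i < C.support.length := by omega
    have hvmem : C.support[i] ∈ C.support := List.getElem_mem _
    have hj : C.support.idxOf C.support[i] < C.support.length :=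
      List.idxOf_lt_length_iff.mpr hvmem
    have hjv : C.support[C.support.idxOf C.support[i]] = C.support[i] :=
      List.getElem_idxOf hj
    have hle : C.support.idxOf C.support[i] ≤ i := indexOf_getElem_le _ i hi'
    by_contra hne
    have hlt : C.support.idxOf C.support[i] < i := by omega
    have := huniq _ i hj hi' hlt hjv
    omega
  have hfa : C.support.idxOf a = 0 := by
    rw [hcons]; exact List.idxOf_cons_self (a := a) (l := _)
  have hLn : ∀ (h : n < C.support.length), C.support[n] = a := by
    intro h
    have h1 := List.getLast_eq_getElem (l := C.support) (by simp)
    rw [C.getLast_support] at h1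
    rw [getElem_idx_congr (show n = C.support.length - 1 by omega) h, ← h1]
  have hflt : ∀ v : V, C.support.idxOf v < n := by
    intro v
    have hmem := hham v
    have hj : C.support.idxOf v < C.support.length := List.idxOf_lt_length_iff.mpr hmem
    have hjv : C.support[C.support.idxOf v] = v := List.getElem_idxOf hj
    by_contra hge
    have hjn : C.support.idxOf v = n := by omega
    have hva : v = a := by
      rw [← hjv, getElem_idx_congr hjn hj]
      exact hLn (by omega)
    rw [hva, hfa] at hjn
    omega
  have hinj : Function.Injective (fun v => C.support.idxOf v) := by
    intro u v h
    exact (List.idxOf_inj (hham u) (y := v)).mp h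
  have hcard : Fintype.card V = n := by
    have h1 : C.support.tail.toFinset = Finset.univ := by
      apply Finset.eq_univ_iff_forall.mpr
      intro v
      rw [List.mem_toFinset]
      have hm := hham v
      rw [hcons] at hm
      rcases List.mem_cons.mp hm with rfl | h
      · have h2 := List.getLast_mem htne
        rwa [hlast] at h2
      · exact h
    rw [← Finset.card_univ, ← h1, List.toFinset_card_of_nodup htail, htlen]
  have heven : Even n := by
    obtain ⟨M₀, hM₀, -⟩ := hcov e₀ he₀
    exact hcard ▸ even_card_of_pm hM₀
  have himg : Finset.univ.image (fun v => C.support.idxOf v) = Finset.range n := by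
    apply Finset.eq_of_subset_of_card_le
    · intro k hk
      rw [Finset.mem_image] at hk
      obtain ⟨v, -, rfl⟩ := hk
      exact Finset.mem_range.mpr (hflt v)
    · rw [Finset.card_range, Finset.card_image_of_injective _ hinj, Finset.card_univ, hcard]
  obtain ⟨m, hm⟩ := heven
  have hBcard : (Finset.univ.filter fun v => C.support.idxOf v % 2 = 0).card = n / 2 := by
    have h2 : ((Finset.range n).filter fun k => k % 2 = 0)
        = (Finset.univ.filter fun v => C.support.idxOf v % 2 = 0).image
            (fun v => C.support.idxOf v) := by
      rw [← himg, Finset.filter_image]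
    have h3 := count_range_even n
    rw [h2, Finset.card_image_of_injective _ hinj] at h3
    omega
  have hWcard : (Finset.univ.filter fun v => ¬ C.support.idxOf v % 2 = 0).card = n / 2 := by
    have h4 := Finset.card_filter_add_card_filter_not
      (s := (Finset.univ : Finset V)) (p := fun v => C.support.idxOf v % 2 = 0)
    rw [Finset.card_univ, hcard, hBcard] at h4
    omega
  have hedge := edge_bicolor C n hLlen h3 (by omega) hfa hLn hidx
  have hchord : ∀ u v : V, C.support.idxOf u % 2 = C.support.idxOf v % 2 →
      s(u, v) ∉ C.edges := by
    intro u v hpar hmem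
    obtain ⟨u', v', heq, h1, h2⟩ := hedge _ hmem
    rw [Sym2.eq_iff] at heq
    rcases heq with ⟨rfl, rfl⟩ | ⟨rfl, rfl⟩ <;> omega
  have hmono : ∃ x y, G.Adj x y ∧
      C.support.idxOf x % 2 = C.support.idxOf y % 2 := by
    by_contra h
    push_neg at h
    exact hnb ⟨SimpleGraph.Coloring.mk
      (fun v => (⟨C.support.idxOf v % 2, by omega⟩ : Fin 2))
      (fun {u v} hadj hEq => h u v hadj (by simpa using congrArg Fin.val hEq))⟩
  have step1 : ∀ x y : V, G.Adj x y → C.support.idxOf x % 2 = 0 →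
      C.support.idxOf y % 2 = 0 →
      ∃ u v, G.Adj u v ∧ ¬ C.support.idxOf u % 2 = 0 ∧ ¬ C.support.idxOf v % 2 = 0 := by
    intro x y hadj hx hy
    obtain ⟨M, hM, hmem⟩ := hcov s(x, y) (G.mem_edgeSet.mpr hadj)
    by_contra hcon
    push_neg at hcon
    have hno : ∀ u v : V, s(u, v) ∈ M →
        C.support.idxOf u % 2 = 0 ∨ C.support.idxOf v % 2 = 0 := by
      intro u v huv
      by_cases h1 : C.support.idxOf u % 2 = 0
      · exact Or.inl h1
      · exact Or.inr (hcon u v (G.mem_edgeSet.mp (hM.1 huv)) h1)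
    have hk := key hM (fun v => C.support.idxOf v % 2 = 0) hmem hx hy hno
    rw [hBcard, hWcard] at hk
    omega
  have step2 : ∀ x y : V, G.Adj x y → ¬ C.support.idxOf x % 2 = 0 →
      ¬ C.support.idxOf y % 2 = 0 →
      ∃ u v, G.Adj u v ∧ C.support.idxOf u % 2 = 0 ∧ C.support.idxOf v % 2 = 0 := by
    intro x y hadj hx hy
    obtain ⟨M, hM, hmem⟩ := hcov s(x, y) (G.mem_edgeSet.mpr hadj)
    by_contra hcon
    push_neg at hcon
    have hno : ∀ u v : V, s(u, v) ∈ M →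
        ¬ C.support.idxOf u % 2 = 0 ∨ ¬ C.support.idxOf v % 2 = 0 := by
      intro u v huv
      by_cases h1 : C.support.idxOf u % 2 = 0
      · exact Or.inr (fun h2 => hcon u v (G.mem_edgeSet.mp (hM.1 huv)) h1 h2)
      · exact Or.inl h1
    have hk := key hM (fun v => ¬ C.support.idxOf v % 2 = 0) hmem hx hy hno
    simp only [not_not] at hk
    rw [hBcard, hWcard] at hk
    omega
  obtain ⟨x, y, hadj, hpar⟩ := hmono
  have hboth : (∃ u v, G.Adj u v ∧ C.support.idxOf u % 2 = 0 ∧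
        C.support.idxOf v % 2 = 0) ∧
      (∃ u v, G.Adj u v ∧ ¬ C.support.idxOf u % 2 = 0 ∧
        ¬ C.support.idxOf v % 2 = 0) := by
    by_cases h0 : C.support.idxOf x % 2 = 0
    · have hy0 : C.support.idxOf y % 2 = 0 := by omega
      exact ⟨⟨x, y, hadj, h0, hy0⟩, step1 x y hadj h0 hy0⟩
    · have hy1 : ¬ C.support.idxOf y % 2 = 0 := by omega
      exact ⟨step2 x y hadj h0 hy1, ⟨x, y, hadj, h0, hy1⟩⟩
  obtain ⟨⟨b1, b2, hbadj, hb1, hb2⟩, ⟨w1, w2, hwadj, hw1, hw2⟩⟩ := hboth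
  constructor
  · exact ⟨s(b1, b2), G.mem_edgeSet.mpr hbadj,
      hchord b1 b2 (by omega), b1, b2, rfl, hb1, hb2⟩
  · exact ⟨s(w1, w2), G.mem_edgeSet.mpr hwadj,
      hchord w1 w2 (by omega), w1, w2, rfl, hw1, hw2⟩
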